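/- Let v ∈ ℂ⁴ be nonzero with (v|v) = 0. Then the set N(v) = {x ∈ ℝ⁶ : X(x)·conj(v) = 0} is a real-linear subspace of ℝ⁶ of real dimension 2 on which the quadratic form vanishes identically (Q(x) = 0 for every x ∈ N(v)); i.e., N(v) is a maximal totally isotropic subspace of ℝ^{4,2}. -/

import Mathlib

open Matrix Complex

/-- The six antilinear-Clifford matrices Γ₁,…,Γ₆ (indexed 0,…,5). -/
noncomputable def Gam : Fin 6 → Matrix (Fin 4) (Fin 4) ℂ
  | 0 => !![0, 0, I, 0; 0, 0, 0, -I; I, 0, 0, 0; 0, -I, 0, 0]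
  | 1 => !![0, 0, 1, 0; 0, 0, 0, 1; 1, 0, 0, 0; 0, 1, 0, 0]
  | 2 => !![0, 0, 0, -I; 0, 0, -I, 0; 0, -I, 0, 0; -I, 0, 0, 0]
  | 3 => !![0, I, 0, 0; -I, 0, 0, 0; 0, 0, 0, I; 0, 0, -I, 0]
  | 4 => !![0, 0, 0, -1; 0, 0, 1, 0; 0, 1, 0, 0; -1, 0, 0, 0]
  | 5 => !![0, 1, 0, 0; -1, 0, 0, 0; 0, 0, 0, -1; 0, 0, 1, 0]

/-- X(x) = Σ x^α Γ_α. -/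
noncomputable def Xm (x : Fin 6 → ℝ) : Matrix (Fin 4) (Fin 4) ℂ :=
  ∑ α : Fin 6, (x α : ℂ) • Gam α

/-- The quadratic form of signature (4,2). -/
def Qform (x : Fin 6 → ℝ) : ℝ :=
  x 0 ^ 2 + x 1 ^ 2 + x 2 ^ 2 - x 3 ^ 2 + x 4 ^ 2 - x 5 ^ 2

/-- The bilinear form of signature (4,2). -/
def Qbil (x y : Fin 6 → ℝ) : ℝ :=
  x 0 * y 0 + x 1 * y 1 + x 2 * y 2 - x 3 * y 3 + x 4 * y 4 - x 5 * y 5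

/-- G = diag(1,1,-1,-1) as a function. -/
def Gv : Fin 4 → ℝ := ![1, 1, -1, -1]

/-- The pseudo-Hermitian form of signature (2,2) on ℂ⁴. -/
def herm (u v : Fin 4 → ℂ) : ℂ :=
  u 0 * starRingEnd ℂ (v 0) + u 1 * starRingEnd ℂ (v 1)
    - u 2 * starRingEnd ℂ (v 2) - u 3 * starRingEnd ℂ (v 3)

/-- The Levi-Civita symbol on four indices, ε^{0123} = 1. -/
noncomputable def eps (i j k l : Fin 4) : ℝ :=
  (((j : ℕ) : ℝ) - ((i : ℕ) : ℝ)) * (((k : ℕ) : ℝ) - ((i : ℕ) : ℝ)) *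
    (((l : ℕ) : ℝ) - ((i : ℕ) : ℝ)) * (((k : ℕ) : ℝ) - ((j : ℕ) : ℝ)) *
    (((l : ℕ) : ℝ) - ((j : ℕ) : ℝ)) * (((l : ℕ) : ℝ) - ((k : ℕ) : ℝ)) / 12

/-- The six antisymmetric matrices Σ₁,…,Σ₆ (indexed 0,…,5). -/
noncomputable def Sig : Fin 6 → Matrix (Fin 4) (Fin 4) ℂ
  | 0 => !![0, 0, -I, 0; 0, 0, 0, I; I, 0, 0, 0; 0, -I, 0, 0]
  | 1 => !![0, 0, -1, 0; 0, 0, 0, -1; 1, 0, 0, 0; 0, 1, 0, 0]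
  | 2 => !![0, 0, 0, I; 0, 0, I, 0; 0, -I, 0, 0; -I, 0, 0, 0]
  | 3 => !![0, I, 0, 0; -I, 0, 0, 0; 0, 0, 0, -I; 0, 0, I, 0]
  | 4 => !![0, 0, 0, 1; 0, 0, -1, 0; 0, 1, 0, 0; -1, 0, 0, 0]
  | 5 => !![0, 1, 0, 0; -1, 0, 0, 0; 0, 0, 0, 1; 0, 0, -1, 0]

/-- Σ(x) = Σ x^α Σ_α. -/
noncomputable def Sm (x : Fin 6 → ℝ) : Matrix (Fin 4) (Fin 4) ℂ :=
  ∑ α : Fin 6, (x α : ℂ) • Sig α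

/-- The antilinear Hodge star on antisymmetric 4×4 complex matrices. -/
noncomputable def hstar (A : Matrix (Fin 4) (Fin 4) ℂ) : Matrix (Fin 4) (Fin 4) ℂ :=
  Matrix.of fun i j =>
    (1 / 2 : ℂ) * ∑ k : Fin 4, ∑ l : Fin 4,
      ((eps i j k l : ℝ) : ℂ) * ((Gv k : ℝ) : ℂ) * ((Gv l : ℝ) : ℂ) * starRingEnd ℂ (A k l)

/-- For a nonzero isotropic spinor v, the set N(v) = {x ∈ ℝ⁶ : X(x)·conj(v) = 0} is a
real-linear subspace of ℝ⁶ of dimension 2 (the span of two linearly independent vectors)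
on which Q vanishes identically: a maximal totally isotropic subspace of ℝ^{4,2}. -/
lemma Xm_mulVec (x : Fin 6 → ℝ) (w : Fin 4 → ℂ) :
    (Xm x).mulVec w = ![
      ((x 5:ℂ) + x 3 * I) * w 1 + ((x 1:ℂ) + x 0 * I) * w 2 + (-(x 4:ℂ) - x 2 * I) * w 3,
      -(((x 5:ℂ) + x 3 * I) * w 0) + ((x 4:ℂ) - x 2 * I) * w 2 + ((x 1:ℂ) - x 0 * I) * w 3,
      ((x 1:ℂ) + x 0 * I) * w 0 + ((x 4:ℂ) - x 2 * I) * w 1 + (-(x 5:ℂ) + x 3 * I) * w 3,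
      (-(x 4:ℂ) - x 2 * I) * w 0 + ((x 1:ℂ) - x 0 * I) * w 1 + ((x 5:ℂ) - x 3 * I) * w 2] := by
  funext i
  fin_cases i <;>
    simp [Xm, Gam, Matrix.mulVec, dotProduct, Fin.sum_univ_six, Fin.sum_univ_four] <;>
    ring

lemma Xm_add_smul (s t : ℝ) (y z : Fin 6 → ℝ) :
    Xm (s • y + t • z) = (s:ℂ) • Xm y + (t:ℂ) • Xm z := by
  simp only [Xm, Finset.smul_sum, ← Finset.sum_add_distrib]
  refine Finset.sum_congr rfl fun α _ => ?_
  simp only [Pi.add_apply, Pi.smul_apply, smul_eq_mul]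
  push_cast
  rw [add_smul, smul_smul, smul_smul]

theorem Nv_maximal_isotropic (v : Fin 4 → ℂ) (hv : v ≠ 0) (hiso : herm v v = 0) :
    (∃ x₁ x₂ : Fin 6 → ℝ, LinearIndependent ℝ ![x₁, x₂] ∧
      {x : Fin 6 → ℝ | (Xm x).mulVec (fun i => starRingEnd ℂ (v i)) = 0} =
        ↑(Submodule.span ℝ ({x₁, x₂} : Set (Fin 6 → ℝ)))) ∧
    ∀ x : Fin 6 → ℝ, (Xm x).mulVec (fun i => starRingEnd ℂ (v i)) = 0 → Qform x = 0 := by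
  have hiso' : v 0 * starRingEnd ℂ (v 0) + v 1 * starRingEnd ℂ (v 1)
      - v 2 * starRingEnd ℂ (v 2) - v 3 * starRingEnd ℂ (v 3) = 0 := hiso
  set Er : ℝ := Complex.normSq (v 2) + Complex.normSq (v 3) with hErdef
  have hEr : (Er : ℂ) = v 2 * starRingEnd ℂ (v 2) + v 3 * starRingEnd ℂ (v 3) := by
    rw [hErdef]; push_cast [Complex.mul_conj]; ring
  have hEr0 : Er ≠ 0 := by
    intro h
    have hF : (Complex.normSq (v 0) + Complex.normSq (v 1) : ℂ) = (Er : ℂ) := by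
      rw [hEr]; push_cast [Complex.mul_conj] at hiso' ⊢; linear_combination hiso'
    have hF' : Complex.normSq (v 0) + Complex.normSq (v 1) = Er := by exact_mod_cast hF
    apply hv
    have n0 := Complex.normSq_nonneg (v 0); have n1 := Complex.normSq_nonneg (v 1)
    have n2 := Complex.normSq_nonneg (v 2); have n3 := Complex.normSq_nonneg (v 3)
    have z : ∀ j : Fin 4, Complex.normSq (v j) = 0 → v j = 0 := fun j hj =>
      Complex.normSq_eq_zero.mp hj
    have hEE : Complex.normSq (v 2) + Complex.normSq (v 3) = 0 := by rw [← hErdef]; exact h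
    funext i
    fin_cases i
    · exact z 0 (by linarith)
    · exact z 1 (by linarith)
    · exact z 2 (by linarith)
    · exact z 3 (by linarith)
  set A : ℂ := v 0 * starRingEnd ℂ (v 3) - v 2 * starRingEnd ℂ (v 1) with hA
  set B : ℂ := v 0 * starRingEnd ℂ (v 3) + v 2 * starRingEnd ℂ (v 1) with hB
  set C : ℂ := v 0 * starRingEnd ℂ (v 2) + v 3 * starRingEnd ℂ (v 1) with hC
  set D : ℂ := v 0 * starRingEnd ℂ (v 2) - v 3 * starRingEnd ℂ (v 1) with hD
  have hAp : (A.re : ℂ) + A.im * I = A := Complex.re_add_im A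
  have hBp : (B.re : ℂ) + B.im * I = B := Complex.re_add_im B
  have hCp : (C.re : ℂ) + C.im * I = C := Complex.re_add_im C
  have hDp : (D.re : ℂ) + D.im * I = D := Complex.re_add_im D
  have hApc : (A.re : ℂ) - A.im * I = starRingEnd ℂ A := by apply Complex.ext <;> simp
  have hBpc : (B.re : ℂ) - B.im * I = starRingEnd ℂ B := by apply Complex.ext <;> simp
  have hCpc : (C.re : ℂ) - C.im * I = starRingEnd ℂ C := by apply Complex.ext <;> simp
  have hDpc : (D.re : ℂ) - D.im * I = starRingEnd ℂ D := by apply Complex.ext <;> simp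
  have hAc : starRingEnd ℂ A = starRingEnd ℂ (v 0) * v 3 - starRingEnd ℂ (v 2) * v 1 := by
    rw [hA]; simp only [map_sub, _root_.map_mul, Complex.conj_conj]
  have hBc : starRingEnd ℂ B = starRingEnd ℂ (v 0) * v 3 + starRingEnd ℂ (v 2) * v 1 := by
    rw [hB]; simp only [map_add, _root_.map_mul, Complex.conj_conj]
  have hCc : starRingEnd ℂ C = starRingEnd ℂ (v 0) * v 2 + starRingEnd ℂ (v 3) * v 1 := by
    rw [hC]; simp only [map_add, _root_.map_mul, Complex.conj_conj]
  have hDc : starRingEnd ℂ D = starRingEnd ℂ (v 0) * v 2 - starRingEnd ℂ (v 3) * v 1 := by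
    rw [hD]; simp only [map_sub, _root_.map_mul, Complex.conj_conj]
  set x₁ : Fin 6 → ℝ := ![A.im, A.re, C.im, 0, C.re, Er] with hx1
  set x₂ : Fin 6 → ℝ := ![-B.re, B.im, -D.re, Er, D.im, 0] with hx2
  -- membership of x₁
  have hm1 : (Xm x₁).mulVec (fun i => starRingEnd ℂ (v i)) = 0 := by
    rw [Xm_mulVec]
    funext i
    fin_cases i
    · show (((Er:ℝ):ℂ) + ((0:ℝ):ℂ) * I) * starRingEnd ℂ (v 1)
          + (((A.re:ℝ):ℂ) + ((A.im:ℝ):ℂ) * I) * starRingEnd ℂ (v 2)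
          + (-((C.re:ℝ):ℂ) - ((C.im:ℝ):ℂ) * I) * starRingEnd ℂ (v 3) = 0
      push_cast
      linear_combination (starRingEnd ℂ (v 2)) * hAp + (starRingEnd ℂ (v 2)) * hA
        - (starRingEnd ℂ (v 3)) * hCp - (starRingEnd ℂ (v 3)) * hC + (starRingEnd ℂ (v 1)) * hEr
    · show -((((Er:ℝ):ℂ) + ((0:ℝ):ℂ) * I) * starRingEnd ℂ (v 0))
          + (((C.re:ℝ):ℂ) - ((C.im:ℝ):ℂ) * I) * starRingEnd ℂ (v 2)
          + (((A.re:ℝ):ℂ) - ((A.im:ℝ):ℂ) * I) * starRingEnd ℂ (v 3) = 0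
      push_cast
      linear_combination (starRingEnd ℂ (v 2)) * hCpc + (starRingEnd ℂ (v 2)) * hCc
        + (starRingEnd ℂ (v 3)) * hApc + (starRingEnd ℂ (v 3)) * hAc - (starRingEnd ℂ (v 0)) * hEr
    · show (((A.re:ℝ):ℂ) + ((A.im:ℝ):ℂ) * I) * starRingEnd ℂ (v 0)
          + (((C.re:ℝ):ℂ) - ((C.im:ℝ):ℂ) * I) * starRingEnd ℂ (v 1)
          + (-((Er:ℝ):ℂ) + ((0:ℝ):ℂ) * I) * starRingEnd ℂ (v 3) = 0
      push_cast
      linear_combination (starRingEnd ℂ (v 0)) * hAp + (starRingEnd ℂ (v 0)) * hA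
        + (starRingEnd ℂ (v 1)) * hCpc + (starRingEnd ℂ (v 1)) * hCc
        - (starRingEnd ℂ (v 3)) * hEr + (starRingEnd ℂ (v 3)) * hiso'
    · show (-((C.re:ℝ):ℂ) - ((C.im:ℝ):ℂ) * I) * starRingEnd ℂ (v 0)
          + (((A.re:ℝ):ℂ) - ((A.im:ℝ):ℂ) * I) * starRingEnd ℂ (v 1)
          + (((Er:ℝ):ℂ) - ((0:ℝ):ℂ) * I) * starRingEnd ℂ (v 2) = 0
      push_cast
      linear_combination -(starRingEnd ℂ (v 0)) * hCp - (starRingEnd ℂ (v 0)) * hC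
        + (starRingEnd ℂ (v 1)) * hApc + (starRingEnd ℂ (v 1)) * hAc
        + (starRingEnd ℂ (v 2)) * hEr - (starRingEnd ℂ (v 2)) * hiso'
  -- membership of x₂
  have hm2 : (Xm x₂).mulVec (fun i => starRingEnd ℂ (v i)) = 0 := by
    rw [Xm_mulVec]
    funext i
    fin_cases i
    · show (((0:ℝ):ℂ) + ((Er:ℝ):ℂ) * I) * starRingEnd ℂ (v 1)
          + (((B.im:ℝ):ℂ) + ((-B.re:ℝ):ℂ) * I) * starRingEnd ℂ (v 2)
          + (-((D.im:ℝ):ℂ) - ((-D.re:ℝ):ℂ) * I) * starRingEnd ℂ (v 3) = 0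
      push_cast
      linear_combination -I * (starRingEnd ℂ (v 2)) * hBp - I * (starRingEnd ℂ (v 2)) * hB
        + I * (starRingEnd ℂ (v 3)) * hDp + I * (starRingEnd ℂ (v 3)) * hD
        + I * (starRingEnd ℂ (v 1)) * hEr
        + ((B.im:ℂ) * starRingEnd ℂ (v 2) - (D.im:ℂ) * starRingEnd ℂ (v 3)) * Complex.I_sq
    · show -((((0:ℝ):ℂ) + ((Er:ℝ):ℂ) * I) * starRingEnd ℂ (v 0))
          + (((D.im:ℝ):ℂ) - ((-D.re:ℝ):ℂ) * I) * starRingEnd ℂ (v 2)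
          + (((B.im:ℝ):ℂ) - ((-B.re:ℝ):ℂ) * I) * starRingEnd ℂ (v 3) = 0
      push_cast
      linear_combination I * (starRingEnd ℂ (v 2)) * hDpc + I * (starRingEnd ℂ (v 2)) * hDc
        + I * (starRingEnd ℂ (v 3)) * hBpc + I * (starRingEnd ℂ (v 3)) * hBc
        - I * (starRingEnd ℂ (v 0)) * hEr
        + ((D.im:ℂ) * starRingEnd ℂ (v 2) + (B.im:ℂ) * starRingEnd ℂ (v 3)) * Complex.I_sq
    · show (((B.im:ℝ):ℂ) + ((-B.re:ℝ):ℂ) * I) * starRingEnd ℂ (v 0)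
          + (((D.im:ℝ):ℂ) - ((-D.re:ℝ):ℂ) * I) * starRingEnd ℂ (v 1)
          + (-((0:ℝ):ℂ) + ((Er:ℝ):ℂ) * I) * starRingEnd ℂ (v 3) = 0
      push_cast
      linear_combination -I * (starRingEnd ℂ (v 0)) * hBp - I * (starRingEnd ℂ (v 0)) * hB
        + I * (starRingEnd ℂ (v 1)) * hDpc + I * (starRingEnd ℂ (v 1)) * hDc
        + I * (starRingEnd ℂ (v 3)) * hEr - I * (starRingEnd ℂ (v 3)) * hiso'
        + ((B.im:ℂ) * starRingEnd ℂ (v 0) + (D.im:ℂ) * starRingEnd ℂ (v 1)) * Complex.I_sq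
    · show (-((D.im:ℝ):ℂ) - ((-D.re:ℝ):ℂ) * I) * starRingEnd ℂ (v 0)
          + (((B.im:ℝ):ℂ) - ((-B.re:ℝ):ℂ) * I) * starRingEnd ℂ (v 1)
          + (((0:ℝ):ℂ) - ((Er:ℝ):ℂ) * I) * starRingEnd ℂ (v 2) = 0
      push_cast
      linear_combination I * (starRingEnd ℂ (v 0)) * hDp + I * (starRingEnd ℂ (v 0)) * hD
        + I * (starRingEnd ℂ (v 1)) * hBpc + I * (starRingEnd ℂ (v 1)) * hBc
        - I * (starRingEnd ℂ (v 2)) * hEr + I * (starRingEnd ℂ (v 2)) * hiso'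
        + (-(D.im:ℂ) * starRingEnd ℂ (v 0) + (B.im:ℂ) * starRingEnd ℂ (v 1)) * Complex.I_sq
  -- key consequences for any x in the set
  have key : ∀ x : Fin 6 → ℝ, (Xm x).mulVec (fun i => starRingEnd ℂ (v i)) = 0 →
      Er * x 0 = x 5 * A.im - x 3 * B.re ∧
      Er * x 1 = x 5 * A.re + x 3 * B.im ∧
      Er * x 2 = x 5 * C.im - x 3 * D.re ∧
      Er * x 4 = x 5 * C.re + x 3 * D.im := by
    intro x hx
    rw [Xm_mulVec] at hx
    simp only [Matrix.cons_eq_zero_iff] at hx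
    obtain ⟨h0, h1, -⟩ := hx
    have h1c : -(((x 5:ℂ) - x 3 * I) * v 0) + ((x 4:ℂ) + x 2 * I) * v 2
        + ((x 1:ℂ) + x 0 * I) * v 3 = 0 := by
      have t := congrArg (starRingEnd ℂ) h1
      simp only [map_add, map_neg, _root_.map_mul, map_sub, map_zero, Complex.conj_ofReal,
        Complex.conj_I, Complex.conj_conj] at t
      linear_combination t
    have Hp : (Er:ℂ) * ((x 1:ℂ) + (x 0:ℝ) * I) = (x 5:ℂ) * A + (x 3:ℂ) * (-(I * B)) := by
      linear_combination (v 2) * h0 + (starRingEnd ℂ (v 3)) * h1c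
        + ((x 1:ℂ) + (x 0:ℝ) * I) * hEr - (x 5:ℂ) * hA + (x 3:ℂ) * I * hB
    have Hr : (Er:ℂ) * (-(x 4:ℂ) - x 2 * I) = (x 5:ℂ) * (-C) + (x 3:ℂ) * (I * D) := by
      linear_combination (v 3) * h0 - (starRingEnd ℂ (v 2)) * h1c
        + (-(x 4:ℂ) - x 2 * I) * hEr + (x 5:ℂ) * hC - (x 3:ℂ) * I * hD
    have tpi := congrArg Complex.im Hp
    have tpr := congrArg Complex.re Hp
    have tri := congrArg Complex.im Hr
    have trr := congrArg Complex.re Hr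
    simp only [Complex.mul_im, Complex.mul_re, Complex.add_im, Complex.add_re, Complex.neg_im,
      Complex.neg_re, Complex.ofReal_re, Complex.ofReal_im, Complex.I_re, Complex.I_im,
      Complex.sub_re, Complex.sub_im, mul_zero, zero_mul, mul_one, one_mul, zero_add, add_zero,
      sub_zero, zero_sub, neg_zero, neg_neg] at tpi tpr tri trr
    exact ⟨by linear_combination tpi, by linear_combination tpr,
      by linear_combination -tri, by linear_combination -trr⟩
  -- constant identities
  have HAc : A * starRingEnd ℂ A + C * starRingEnd ℂ C = ((Er:ℂ))^2 := by
    linear_combination (starRingEnd ℂ A) * hA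
      + (v 0 * starRingEnd ℂ (v 3) - v 2 * starRingEnd ℂ (v 1)) * hAc
      + (starRingEnd ℂ C) * hC
      + (v 0 * starRingEnd ℂ (v 2) + v 3 * starRingEnd ℂ (v 1)) * hCc
      + (v 2 * starRingEnd ℂ (v 2) + v 3 * starRingEnd ℂ (v 3)) * hiso'
      - (v 2 * starRingEnd ℂ (v 2) + v 3 * starRingEnd ℂ (v 3) + (Er:ℂ)) * hEr
  have HBc : B * starRingEnd ℂ B + D * starRingEnd ℂ D = ((Er:ℂ))^2 := by
    linear_combination (starRingEnd ℂ B) * hB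
      + (v 0 * starRingEnd ℂ (v 3) + v 2 * starRingEnd ℂ (v 1)) * hBc
      + (starRingEnd ℂ D) * hD
      + (v 0 * starRingEnd ℂ (v 2) - v 3 * starRingEnd ℂ (v 1)) * hDc
      + (v 2 * starRingEnd ℂ (v 2) + v 3 * starRingEnd ℂ (v 3)) * hiso'
      - (v 2 * starRingEnd ℂ (v 2) + v 3 * starRingEnd ℂ (v 3) + (Er:ℂ)) * hEr
  have HXc : starRingEnd ℂ A * B - A * starRingEnd ℂ B + starRingEnd ℂ C * D
      - C * starRingEnd ℂ D = 0 := by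
    linear_combination B * hAc + (starRingEnd ℂ (v 0) * v 3 - starRingEnd ℂ (v 2) * v 1) * hB
      - (starRingEnd ℂ B) * hA - (v 0 * starRingEnd ℂ (v 3) - v 2 * starRingEnd ℂ (v 1)) * hBc
      + D * hCc + (starRingEnd ℂ (v 0) * v 2 + starRingEnd ℂ (v 3) * v 1) * hD
      - (starRingEnd ℂ D) * hC - (v 0 * starRingEnd ℂ (v 2) + v 3 * starRingEnd ℂ (v 1)) * hDc
  have HAr : A.re^2 + A.im^2 + C.re^2 + C.im^2 = Er^2 := by
    have hc : (Complex.normSq A + Complex.normSq C : ℂ) = ((Er^2 : ℝ) : ℂ) := by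
      rw [← Complex.mul_conj, ← Complex.mul_conj]; push_cast; linear_combination HAc
    have h' : Complex.normSq A + Complex.normSq C = Er^2 := by exact_mod_cast hc
    rw [Complex.normSq_apply, Complex.normSq_apply] at h'
    linear_combination h'
  have HBr : B.re^2 + B.im^2 + D.re^2 + D.im^2 = Er^2 := by
    have hc : (Complex.normSq B + Complex.normSq D : ℂ) = ((Er^2 : ℝ) : ℂ) := by
      rw [← Complex.mul_conj, ← Complex.mul_conj]; push_cast; linear_combination HBc
    have h' : Complex.normSq B + Complex.normSq D = Er^2 := by exact_mod_cast hc
    rw [Complex.normSq_apply, Complex.normSq_apply] at h'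
    linear_combination h'
  have HXr : A.re * B.im - A.im * B.re + C.re * D.im - C.im * D.re = 0 := by
    have t := congrArg Complex.im HXc
    simp only [Complex.sub_im, Complex.add_im, Complex.mul_im, Complex.conj_re, Complex.conj_im,
      Complex.zero_im, neg_mul, mul_neg, neg_neg] at t
    linear_combination t / 2
  -- Q vanishes on the set
  have hQ : ∀ x : Fin 6 → ℝ, (Xm x).mulVec (fun i => starRingEnd ℂ (v i)) = 0 →
      Qform x = 0 := by
    intro x hx
    obtain ⟨e0, e1, e2, e4⟩ := key x hx
    have hq2 : Er^2 * Qform x = 0 := by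
      simp only [Qform]
      linear_combination (Er * x 0 + x 5 * A.im - x 3 * B.re) * e0
        + (Er * x 1 + x 5 * A.re + x 3 * B.im) * e1
        + (Er * x 2 + x 5 * C.im - x 3 * D.re) * e2
        + (Er * x 4 + x 5 * C.re + x 3 * D.im) * e4
        + (x 5)^2 * HAr + (x 3)^2 * HBr + 2 * x 3 * x 5 * HXr
    rcases mul_eq_zero.mp hq2 with h | h
    · exact absurd h (pow_ne_zero 2 hEr0)
    · exact h
  refine ⟨⟨x₁, x₂, ?_, ?_⟩, hQ⟩
  · rw [LinearIndependent.pair_iff]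
    intro s t hst
    have h5 : s * Er + t * 0 = 0 := congrFun hst 5
    have h3 : s * 0 + t * Er = 0 := congrFun hst 3
    constructor
    · rcases mul_eq_zero.mp (show s * Er = 0 by linarith) with h | h
      · exact h
      · exact absurd h hEr0
    · rcases mul_eq_zero.mp (show t * Er = 0 by linarith) with h | h
      · exact h
      · exact absurd h hEr0
  · ext x
    simp only [Set.mem_setOf_eq, SetLike.mem_coe, Submodule.mem_span_pair]
    constructor
    · intro hx
      obtain ⟨e0, e1, e2, e4⟩ := key x hx
      refine ⟨x 5 / Er, x 3 / Er, ?_⟩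
      funext i
      fin_cases i
      · show x 5 / Er * A.im + x 3 / Er * (-B.re) = x 0
        rw [div_mul_eq_mul_div, div_mul_eq_mul_div, ← add_div, eq_comm, eq_div_iff hEr0]
        linear_combination e0
      · show x 5 / Er * A.re + x 3 / Er * B.im = x 1
        rw [div_mul_eq_mul_div, div_mul_eq_mul_div, ← add_div, eq_comm, eq_div_iff hEr0]
        linear_combination e1
      · show x 5 / Er * C.im + x 3 / Er * (-D.re) = x 2
        rw [div_mul_eq_mul_div, div_mul_eq_mul_div, ← add_div, eq_comm, eq_div_iff hEr0]
        linear_combination e2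
      · show x 5 / Er * 0 + x 3 / Er * Er = x 3
        field_simp; ring
      · show x 5 / Er * C.re + x 3 / Er * D.im = x 4
        rw [div_mul_eq_mul_div, div_mul_eq_mul_div, ← add_div, eq_comm, eq_div_iff hEr0]
        linear_combination e4
      · show x 5 / Er * Er + x 3 / Er * 0 = x 5
        field_simp; ring
    · rintro ⟨s, t, rfl⟩
      rw [Xm_add_smul, Matrix.add_mulVec, Matrix.smul_mulVec, Matrix.smul_mulVec,
        hm1, hm2, smul_zero, smul_zero, add_zero]
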